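/- Let (Γ,μ) be a weighted graph satisfying the uniform mean exit time condition (E), and set F(R)=inf_{x∈Γ} E(x,R). Then F is superadditive, i.e. F(R+S) ≥ F(R)+F(S) for all R,S∈ℕ with R>S>0, and consequently F(L·R) ≥ L·F(R) for all L,R∈ℕ. -/

import Mathlib

open Classical

noncomputable section

/-- A weighted graph: symmetric nonnegative edge weights, zero on the diagonal,
positive exactly on edges, with finitely many neighbours at each vertex. -/
structure WeightedGraph (V : Type*) where
  w : V → V → ℝ
  w_symm : ∀ x y, w x y = w y x
  w_nonneg : ∀ x y, 0 ≤ w x y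
  w_irrefl : ∀ x, w x x = 0
  locFin : ∀ x, {y | 0 < w x y}.Finite

/-- A space-time scale function is proper. -/
def properF (F : ℕ → ℝ) : Prop :=
  StrictMono F ∧
  (∃ D : ℝ, 0 < D ∧ ∀ R : ℕ, F (2 * R) ≤ D * F R) ∧
  (∀ R S : ℕ, F R + F S ≤ F (R + S)) ∧
  (∃ (A : ℕ) (B : ℝ), 1 < A ∧ 1 < B ∧ ∀ R : ℕ, B * F R ≤ F (A * R)) ∧
  (∃ c : ℝ, 0 < c ∧ ∀ R : ℕ, c * (R : ℝ) ^ 2 ≤ F R)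

/-- A proper scale function satisfying the strong anti-doubling property `B_F > A_F`. -/
def veryProperF (F : ℕ → ℝ) : Prop :=
  properF F ∧
  (∃ (A : ℕ) (B : ℝ), 1 < A ∧ (A : ℝ) < B ∧ ∀ R : ℕ, B * F R ≤ F (A * R))

/-- The (generalized) inverse of a scale function. -/
def finvF (F : ℕ → ℝ) (t : ℝ) : ℕ := sInf {R : ℕ | t ≤ F R}

/-- The sub-Gaussian kernel `k(n,R)`: the maximal integer `k ≥ 1` with
`n/k ≤ F(⌊R/k⌋)`, and `0` if there is none. -/
def kkerF (F : ℕ → ℝ) (n R : ℕ) : ℕ :=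
  sSup {k : ℕ | 1 ≤ k ∧ (n : ℝ) / (k : ℝ) ≤ F (R / k)}

namespace WeightedGraph

variable {V : Type*}

/-- The underlying simple graph. -/
def toSimpleGraph (G : WeightedGraph V) : SimpleGraph V where
  Adj x y := 0 < G.w x y
  symm := by
    constructor
    intro x y h
    show 0 < G.w y x
    rw [G.w_symm y x]
    exact h
  loopless := by
    constructor
    intro x h
    change 0 < G.w x x at h
    rw [G.w_irrefl x] at h
    exact lt_irrefl 0 h

/-- The graph (shortest path) distance. -/
def gdist (G : WeightedGraph V) (x y : V) : ℕ := G.toSimpleGraph.dist x y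

/-- The open metric ball `B(x,r) = {y : d(x,y) < r}`. -/
def ball (G : WeightedGraph V) (x : V) (r : ℝ) : Set V := {y | (G.gdist x y : ℝ) < r}

/-- The sphere `S(x,R) = {y : d(x,y) = R}`. -/
def sphere (G : WeightedGraph V) (x : V) (R : ℕ) : Set V := {y | G.gdist x y = R}

/-- The external boundary of a set. -/
def extBoundary (G : WeightedGraph V) (A : Set V) : Set V :=
  {y | y ∉ A ∧ ∃ x ∈ A, 0 < G.w x y}

/-- The vertex measure `μ(x) = Σ_{y ∼ x} μ_{xy}`. -/
def mu (G : WeightedGraph V) (x : V) : ℝ := ∑' y, G.w x y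

/-- The volume `V(x,r) = μ(B(x,r))`. -/
def vol (G : WeightedGraph V) (x : V) (r : ℝ) : ℝ := ∑' y : G.ball x r, G.mu y.1

/-- The volume of the annulus `v(x,s,r) = V(x,r) - V(x,s)`. -/
def annv (G : WeightedGraph V) (x : V) (s r : ℝ) : ℝ := G.vol x r - G.vol x s

/-- One-step transition probability `P(x,y) = μ_{xy}/μ(x)`. -/
def Pstep (G : WeightedGraph V) (x y : V) : ℝ := G.w x y / G.mu x

/-- `n`-step transition probability. -/
def Pn (G : WeightedGraph V) : ℕ → V → V → ℝ
  | 0, x, y => if x = y then 1 else 0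
  | n + 1, x, y => ∑' z, G.Pstep x z * Pn G n z y

/-- The heat kernel `p_n(x,y) = P_n(x,y)/μ(y)`. -/
def hk (G : WeightedGraph V) (n : ℕ) (x y : V) : ℝ := G.Pn n x y / G.mu y

/-- One step of the walk killed on exiting `A`. -/
def PstepA (G : WeightedGraph V) (A : Set V) (x y : V) : ℝ :=
  if x ∈ A ∧ y ∈ A then G.Pstep x y else 0

/-- `n`-step transition probability of the killed walk. -/
def PnA (G : WeightedGraph V) (A : Set V) : ℕ → V → V → ℝ
  | 0, x, y => if x = y ∧ x ∈ A then 1 else 0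
  | n + 1, x, y => ∑' z, G.PstepA A x z * PnA G A n z y

/-- The local Green kernel `g^A(y,z) = (Σ_k P_k^A(y,z))/μ(z)`. -/
def green (G : WeightedGraph V) (A : Set V) (y z : V) : ℝ :=
  (∑' k, G.PnA A k y z) / G.mu z

/-- The mean exit time `E_z(A) = Σ_{k≥0} P_z(T_A > k) = Σ_k Σ_{y} P_k^A(z,y)`. -/
def meanExit (G : WeightedGraph V) (A : Set V) (z : V) : ℝ :=
  ∑' (k : ℕ), ∑' (y : V), G.PnA A k z y

/-- `E(x,r)`: the mean exit time from the ball `B(x,r)` started at `x`. -/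
def mexit (G : WeightedGraph V) (x : V) (r : ℝ) : ℝ := G.meanExit (G.ball x r) x

/-- `e(x,t) = min{R ∈ ℕ : E(x,R) ≥ t}`, the inverse of the mean exit time. -/
def einv (G : WeightedGraph V) (x : V) (t : ℝ) : ℕ := sInf {R : ℕ | t ≤ G.mexit x R}

/-- `P(T_A < n)` for the walk started at `z`. -/
def exitProbLT (G : WeightedGraph V) (A : Set V) (z : V) (n : ℕ) : ℝ :=
  1 - ∑' y, G.PnA A (n - 1) z y

/-- The local sub-Gaussian kernel `k̲(x,n,R)`. -/
def lker (G : WeightedGraph V) (x : V) (n R : ℕ) : ℕ :=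
  sSup {k : ℕ | 1 ≤ k ∧ (n : ℝ) / (k : ℝ) ≤ ⨅ y : G.ball x R, G.mexit y.1 ((R / k : ℕ) : ℝ)}

/-- `u` is harmonic on `A`. -/
def Harmonic (G : WeightedGraph V) (A : Set V) (u : V → ℝ) : Prop :=
  ∀ x ∈ A, (∑' y, G.Pstep x y * u y) = u x

/-- The Dirichlet form (energy). -/
def dirichletEnergy (G : WeightedGraph V) (f : V → ℝ) : ℝ :=
  (1 / 2) * ∑' p : V × V, G.w p.1 p.2 * (f p.1 - f p.2) ^ 2

/-- The resistance between two disjoint sets. -/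
def resistance (G : WeightedGraph V) (A B : Set V) : ℝ :=
  (sInf (G.dirichletEnergy '' {f | (∀ x ∈ A, f x = 1) ∧ ∀ x ∈ B, f x = 0}))⁻¹

/-- The resistance of the annulus `ρ(x,s,r) = ρ(B(x,s), Γ∖B(x,r))`. -/
def rho (G : WeightedGraph V) (x : V) (s r : ℝ) : ℝ :=
  G.resistance (G.ball x s) (G.ball x r)ᶜ

/-- The kernel of the `(λ,m)`-resolvent `((λ+1)I - P)^{-m}`. -/
def resolventKer (G : WeightedGraph V) (lam : ℝ) (m : ℕ) (x y : V) : ℝ :=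
  (∑' k : ℕ, (Nat.choose (k + m - 1) k : ℝ) * (1 + lam) ^ (-((m : ℤ) + (k : ℤ))) * G.Pn k x y) /
    G.mu y

/-- `F(R) = inf_x E(x,R)`. -/
def Fm (G : WeightedGraph V) (R : ℕ) : ℝ := ⨅ x : V, G.mexit x R

/-- Condition `(p0)`: controlled weights. -/
def P0 (G : WeightedGraph V) (p0 : ℝ) : Prop :=
  ∀ x y : V, 0 < G.w x y → p0 ≤ G.w x y / G.mu x

/-- Condition `(VD)`: volume doubling. -/
def VD (G : WeightedGraph V) : Prop :=
  ∃ D : ℝ, 0 < D ∧ ∀ (x : V) (R : ℝ), 0 < R → G.vol x (2 * R) ≤ D * G.vol x R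

/-- Condition `(TC)`: the time comparison principle. -/
def TC (G : WeightedGraph V) : Prop :=
  ∃ C : ℝ, 1 < C ∧ ∀ (x : V) (R : ℝ), 0 < R → ∀ y ∈ G.ball x R,
    G.mexit x (2 * R) ≤ C * G.mexit y R

/-- Condition `(TD)`: time doubling. -/
def TD (G : WeightedGraph V) : Prop :=
  ∃ D : ℝ, 0 < D ∧ ∀ (x : V) (R : ℝ), 0 ≤ R → G.mexit x (2 * R) ≤ D * G.mexit x R

/-- Condition `(E)`: the mean exit time is uniform in the space. -/
def UniformE (G : WeightedGraph V) : Prop :=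
  ∃ C : ℝ, 1 < C ∧ ∀ (x y : V) (R : ℝ), 0 < R → G.mexit x R ≤ C * G.mexit y R

/-- The mean value inequality `(MV)`. -/
def MV (G : WeightedGraph V) : Prop :=
  ∃ C : ℝ, 0 < C ∧ ∀ (x : V) (R : ℝ) (u : V → ℝ), 0 < R → (∀ y, 0 ≤ u y) →
    G.Harmonic (G.ball x R) u →
    u x ≤ C / G.vol x R * ∑' y : G.ball x R, u y.1 * G.mu y.1

/-- The local diagonal upper estimate `(DUE)`. -/
def DUE (G : WeightedGraph V) : Prop :=
  ∃ C : ℝ, 0 < C ∧ ∀ (x : V) (n : ℕ), 0 < n →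
    G.hk n x x ≤ C / G.vol x (G.einv x n)

/-- The off-diagonal upper estimate `(UE)`. -/
def UE (G : WeightedGraph V) : Prop :=
  ∃ C β c : ℝ, 0 < C ∧ 1 < β ∧ 0 < c ∧ ∀ (x y : V) (n : ℕ), 0 < n →
    G.hk n x y ≤ C / G.vol x (G.einv x n) *
      Real.exp (-(c * (G.mexit x (G.gdist x y) / n) ^ ((1 : ℝ) / (β - 1))))

/-- A nonnegative Dirichlet solution of the heat equation `P^A u_n = u_{n+1}` up to time `N`. -/
def DirSol (G : WeightedGraph V) (A : Set V) (N : ℕ) (u : ℕ → V → ℝ) : Prop :=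
  (∀ n y, 0 ≤ u n y) ∧ ∀ n, n < N → ∀ z ∈ A, (∑' y, G.PstepA A z y * u n y) = u (n + 1) z

/-- The parabolic mean value inequality `(PMV)`. -/
def PMV (G : WeightedGraph V) : Prop :=
  ∃ c1 c2 C : ℝ, 0 ≤ c1 ∧ c1 < c2 ∧ 1 < C ∧
    ∀ (x : V) (R : ℝ) (u : ℕ → V → ℝ), 0 < R →
      G.DirSol (G.ball x R) ⌊c2 * G.mexit x R⌋₊ u →
      u ⌊c2 * G.mexit x R⌋₊ x ≤ C / (G.vol x R * G.mexit x R) *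
        ∑ i ∈ Finset.Icc ⌊c1 * G.mexit x R⌋₊ ⌊c2 * G.mexit x R⌋₊,
          ∑' y : G.ball x R, u i y.1 * G.mu y.1

/-- The skewed parabolic mean value inequality. -/
def SPMV (G : WeightedGraph V) : Prop :=
  ∃ c1 c2 C : ℝ, 0 < c1 ∧ c1 < c2 ∧ 1 ≤ C ∧
    ∀ (x : V) (R : ℝ) (y : V) (u : ℕ → V → ℝ), 0 < R → y ∈ G.ball x R →
      G.DirSol (G.ball x R) ⌊c2 * G.mexit x R⌋₊ u →
      u ⌊c2 * G.mexit x R⌋₊ x ≤ C / (G.vol y (2 * R) * G.mexit y (2 * R)) *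
        ∑ i ∈ Finset.Icc ⌊c1 * G.mexit x R⌋₊ ⌊c2 * G.mexit x R⌋₊,
          ∑' z : G.ball x R, u i z.1 * G.mu z.1

/-- The mean value property for Green kernels `(MVG)`. -/
def MVG (G : WeightedGraph V) : Prop :=
  ∃ C : ℝ, 1 < C ∧ ∀ (x : V) (R : ℝ) (y : V), 0 < R → 0 < G.gdist x y →
    G.green (G.ball x R) y x ≤ C / G.vol x (G.gdist x y) *
      ∑' z : G.ball x (G.gdist x y : ℝ), G.green (G.ball x R) y z.1 * G.mu z.1

/-- The Green kernel bound `(g01)`: `g^B(y,x) ≤ C·E(x,R)/V(x,d(x,y))`. -/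
def G01 (G : WeightedGraph V) : Prop :=
  ∃ C : ℝ, 1 < C ∧ ∀ (x : V) (R : ℝ) (y : V), 0 < R → 0 < G.gdist x y →
    G.green (G.ball x R) y x ≤ C * G.mexit x R / G.vol x (G.gdist x y)

/-- The elliptic Harnack inequality `(H)`. -/
def EH (G : WeightedGraph V) : Prop :=
  ∃ C : ℝ, 0 < C ∧ ∀ (x : V) (R : ℝ) (u : V → ℝ), 0 < R → (∀ y, 0 ≤ u y) →
    G.Harmonic (G.ball x (2 * R)) u → ∀ y ∈ G.ball x R, ∀ z ∈ G.ball x R, u y ≤ C * u z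

/-- The sub-Gaussian upper estimate `(UE_F)` with respect to `F`. -/
def UEF (G : WeightedGraph V) (F : ℕ → ℝ) : Prop :=
  ∃ C c : ℝ, 0 < C ∧ 0 < c ∧ ∀ (x y : V) (n : ℕ), 0 < n →
    G.hk n x y ≤ C / G.vol x (finvF F n) *
      Real.exp (-(c * (kkerF F n (G.gdist x y) : ℝ)))

/-- The sub-Gaussian lower estimate `(LE_F)` with respect to `F`. -/
def LEF (G : WeightedGraph V) (F : ℕ → ℝ) : Prop :=
  ∃ c C : ℝ, 0 < c ∧ 0 < C ∧ ∀ (x y : V) (n : ℕ), 0 < n →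
    c / G.vol x (finvF F n) * Real.exp (-(C * (kkerF F n (G.gdist x y) : ℝ))) ≤
      G.hk n x y + G.hk (n + 1) x y

/-- The `F`-parabolic Harnack inequality. -/
def PHF (G : WeightedGraph V) (F : ℕ → ℝ) : Prop :=
  ∀ c1 c2 c3 c4 η : ℝ, 0 < c1 → c1 < c2 → c2 < c3 → c3 < c4 → 0 < η → η < 1 →
    ∃ CH : ℝ, 0 < CH ∧ ∀ (x : V) (R k : ℕ) (u : ℕ → V → ℝ), 0 < R →
      (∀ n y, 0 ≤ u n y) →
      (∀ n : ℕ, k ≤ n → (n : ℝ) < (k : ℝ) + F ⌊c4 * (R : ℝ)⌋₊ → ∀ z ∈ G.ball x R,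
        (∑' y, G.Pstep z y * u n y) = u (n + 1) z) →
      ∀ (nm np : ℕ), ∀ xm ∈ G.ball x (η * R), ∀ xp ∈ G.ball x (η * R),
        (k : ℝ) + F ⌊c1 * (R : ℝ)⌋₊ ≤ (nm : ℝ) → (nm : ℝ) ≤ (k : ℝ) + F ⌊c2 * (R : ℝ)⌋₊ →
        (k : ℝ) + F ⌊c3 * (R : ℝ)⌋₊ ≤ (np : ℝ) → (np : ℝ) ≤ (k : ℝ) + F ⌊c4 * (R : ℝ)⌋₊ →
        (G.gdist xm xp : ℝ) ≤ (np : ℝ) - (nm : ℝ) →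
        u nm xm ≤ CH * (u np xp + u (np + 1) xp)

end WeightedGraph

section
open SimpleGraph
variable {V : Type*} (G : SimpleGraph V)

lemma exists_adj_of_connected [Infinite V] (hconn : G.Connected) (x : V) : ∃ y, G.Adj x y := by
  obtain ⟨y, hy⟩ := exists_ne x
  obtain ⟨p⟩ := hconn x y
  cases p with
  | nil => exact absurd rfl (Ne.symm hy)
  | cons h q => exact ⟨_, h⟩

lemma finite_closedBall (hloc : ∀ v : V, {y | G.Adj v y}.Finite) (hconn : G.Connected)
    (x : V) : ∀ n : ℕ, {y : V | G.dist x y ≤ n}.Finite := by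
  intro n
  induction n with
  | zero =>
    apply Set.Finite.subset (Set.finite_singleton x)
    intro y hy
    simp only [Set.mem_setOf_eq, Nat.le_zero] at hy
    have : x = y := by
      have := (hconn x y).dist_eq_zero_iff.mp hy
      exact this
    simp [this]
  | succ n ih =>
    have : {y : V | G.dist x y ≤ n + 1} ⊆
        {y | G.dist x y ≤ n} ∪ ⋃ w ∈ {y | G.dist x y ≤ n}, {y | G.Adj w y} := by
      intro y hy
      simp only [Set.mem_setOf_eq] at hy
      rcases Nat.lt_or_ge (G.dist x y) (n+1) with h | h
      · exact Or.inl (Nat.lt_succ_iff.mp h)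
      · have hd : G.dist x y = n + 1 := le_antisymm hy h
        obtain ⟨p, hp⟩ := (hconn x y).exists_walk_length_eq_dist
        right
        rw [hd] at hp
        -- reverse walk: y to x
        cases hrev : p.reverse with
        | nil =>
          exfalso
          have := congrArg SimpleGraph.Walk.length hrev
          simp [hp] at this
        | cons hadj q =>
          rename_i wmid
          refine Set.mem_biUnion (?_ : G.dist x wmid ≤ n) (hadj.symm)
          have hlen : q.length = n := by
            have := congrArg SimpleGraph.Walk.length hrev
            simp [hp] at this
            omega
          calc G.dist x wmid ≤ q.reverse.length := SimpleGraph.dist_le _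
            _ = n := by simp [hlen]
    exact Set.Finite.subset (ih.union (Set.Finite.biUnion ih (fun w _ => hloc w))) this
end

namespace WeightedGraph

section Aux
variable {V : Type*} (G : WeightedGraph V)

lemma w_summable (x : V) : Summable (G.w x) := by
  apply summable_of_ne_finset_zero (s := (G.locFin x).toFinset)
  intro y hy
  simp only [Set.Finite.mem_toFinset, Set.mem_setOf_eq, not_lt] at hy
  exact le_antisymm hy (G.w_nonneg x y)

lemma mu_nonneg (x : V) : 0 ≤ G.mu x := tsum_nonneg (G.w_nonneg x)

lemma Pstep_nonneg (x y : V) : 0 ≤ G.Pstep x y := div_nonneg (G.w_nonneg x y) (G.mu_nonneg x)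

lemma PstepA_nonneg (A : Set V) (x y : V) : 0 ≤ G.PstepA A x y := by
  unfold PstepA; split <;> simp [G.Pstep_nonneg]

lemma PstepA_le (A : Set V) (x y : V) : G.PstepA A x y ≤ G.Pstep x y := by
  unfold PstepA; split <;> simp [G.Pstep_nonneg]

lemma Pstep_summable (x : V) : Summable (G.Pstep x) := (G.w_summable x).div_const _

lemma tsum_Pstep_eq_one (x : V) (hx : 0 < G.mu x) : ∑' y, G.Pstep x y = 1 := by
  unfold Pstep
  rw [tsum_div_const]
  exact div_self hx.ne'

lemma tsum_Pstep_le_one (x : V) : ∑' y, G.Pstep x y ≤ 1 := by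
  rcases eq_or_lt_of_le (G.mu_nonneg x) with h | h
  · unfold Pstep; rw [← h]; simp
  · exact (G.tsum_Pstep_eq_one x h).le

lemma Pstep_pos_iff (x y : V) (hx : 0 < G.mu x) : 0 < G.Pstep x y ↔ 0 < G.w x y := by
  constructor
  · intro h
    by_contra hw
    have : G.w x y = 0 := le_antisymm (not_lt.1 hw) (G.w_nonneg x y)
    simp [Pstep, this] at h
  · intro h; exact div_pos h hx


lemma PstepA_eq_zero_left (A : Set V) {x : V} (hx : x ∉ A) (y : V) : G.PstepA A x y = 0 := by
  unfold PstepA; rw [if_neg]; tauto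

lemma PstepA_eq_zero_right (A : Set V) (x : V) {y : V} (hy : y ∉ A) : G.PstepA A x y = 0 := by
  unfold PstepA; rw [if_neg]; tauto

lemma PstepA_eq (A : Set V) {x y : V} (hx : x ∈ A) (hy : y ∈ A) :
    G.PstepA A x y = G.Pstep x y := if_pos ⟨hx, hy⟩

lemma PnA_nonneg (A : Set V) : ∀ (k : ℕ) (x y : V), 0 ≤ G.PnA A k x y := by
  intro k
  induction k with
  | zero => intro x y; unfold PnA; split <;> norm_num
  | succ n ih =>
    intro x y
    unfold PnA
    exact tsum_nonneg fun z => mul_nonneg (G.PstepA_nonneg A x z) (ih z y)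

lemma PnA_mem_right (A : Set V) : ∀ (k : ℕ) (x y : V), G.PnA A k x y ≠ 0 → y ∈ A := by
  intro k
  induction k with
  | zero =>
    intro x y h
    unfold PnA at h
    by_contra hy
    rw [if_neg (by rintro ⟨rfl, hx⟩; exact hy hx)] at h
    exact h rfl
  | succ n ih =>
    intro x y h
    unfold PnA at h
    by_contra hy
    apply h
    have hz : ∀ z, G.PstepA A x z * G.PnA A n z y = 0 := by
      intro z
      rcases eq_or_ne (G.PnA A n z y) 0 with h0 | h0
      · rw [h0, mul_zero]
      · exact absurd (ih z y h0) hy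
    simp [hz]

lemma PnA_zero_left (A : Set V) {x : V} (hx : x ∉ A) : ∀ (k : ℕ) (y : V), G.PnA A k x y = 0 := by
  intro k y
  cases k with
  | zero => unfold PnA; rw [if_neg (by rintro ⟨rfl, h⟩; exact hx h)]
  | succ n =>
    unfold PnA
    have : ∀ z, G.PstepA A x z * G.PnA A n z y = 0 := by
      intro z; rw [G.PstepA_eq_zero_left A hx, zero_mul]
    simp [this]


variable {A : Set V} (hA : A.Finite)

/-- survival probability -/
def qs (A : Set V) (hA : A.Finite) (k : ℕ) (z : V) : ℝ := ∑ y ∈ hA.toFinset, G.PnA A k z y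

variable {A : Set V} (hA : A.Finite)

lemma tsum_PnA_eq (k : ℕ) (z : V) : ∑' y, G.PnA A k z y = G.qs A hA k z := by
  apply tsum_eq_sum
  intro y hy
  by_contra h
  exact hy (hA.mem_toFinset.2 (G.PnA_mem_right A k z y h))

lemma PnA_succ_sum (n : ℕ) (x y : V) :
    G.PnA A (n + 1) x y = ∑ w ∈ hA.toFinset, G.PstepA A x w * G.PnA A n w y := by
  show (∑' z, G.PstepA A x z * G.PnA A n z y) = _
  apply tsum_eq_sum
  intro w hw
  rw [G.PstepA_eq_zero_right A x (fun h => hw (hA.mem_toFinset.2 h)), zero_mul]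

lemma qs_succ (n : ℕ) (z : V) :
    G.qs A hA (n + 1) z = ∑ w ∈ hA.toFinset, G.PstepA A z w * G.qs A hA n w := by
  unfold qs
  calc ∑ y ∈ hA.toFinset, G.PnA A (n+1) z y
      = ∑ y ∈ hA.toFinset, ∑ w ∈ hA.toFinset, G.PstepA A z w * G.PnA A n w y :=
        Finset.sum_congr rfl fun y _ => G.PnA_succ_sum hA n z y
    _ = ∑ w ∈ hA.toFinset, ∑ y ∈ hA.toFinset, G.PstepA A z w * G.PnA A n w y :=
        Finset.sum_comm
    _ = ∑ w ∈ hA.toFinset, G.PstepA A z w * ∑ y ∈ hA.toFinset, G.PnA A n w y :=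
        Finset.sum_congr rfl fun w _ => (Finset.mul_sum _ _ _).symm

lemma qs_zero (z : V) : G.qs A hA 0 z = if z ∈ A then 1 else 0 := by
  unfold qs PnA
  split
  · rename_i hz
    rw [Finset.sum_eq_single z]
    · simp [hz]
    · intro y _ hy; rw [if_neg (by rintro ⟨rfl, _⟩; exact hy rfl)]
    · intro h; exact absurd (hA.mem_toFinset.2 hz) h
  · rename_i hz
    apply Finset.sum_eq_zero
    intro y _
    rw [if_neg (by rintro ⟨rfl, h⟩; exact hz h)]

lemma qs_nonneg (k : ℕ) (z : V) : 0 ≤ G.qs A hA k z :=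
  Finset.sum_nonneg fun y _ => G.PnA_nonneg A k z y

lemma sum_PstepA_le_one (z : V) : ∑ w ∈ hA.toFinset, G.PstepA A z w ≤ 1 := by
  calc ∑ w ∈ hA.toFinset, G.PstepA A z w ≤ ∑ w ∈ hA.toFinset, G.Pstep z w :=
        Finset.sum_le_sum fun w _ => G.PstepA_le A z w
    _ ≤ ∑' w, G.Pstep z w := Summable.sum_le_tsum _ (fun w _ => G.Pstep_nonneg z w) (G.Pstep_summable z)
    _ ≤ 1 := G.tsum_Pstep_le_one z

lemma qs_le_one (k : ℕ) (z : V) : G.qs A hA k z ≤ 1 := by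
  induction k generalizing z with
  | zero => rw [G.qs_zero hA]; split <;> norm_num
  | succ n ih =>
    rw [G.qs_succ hA]
    calc ∑ w ∈ hA.toFinset, G.PstepA A z w * G.qs A hA n w
        ≤ ∑ w ∈ hA.toFinset, G.PstepA A z w * 1 :=
          Finset.sum_le_sum fun w _ =>
            mul_le_mul_of_nonneg_left (ih w) (G.PstepA_nonneg A z w)
      _ ≤ 1 := by simpa using G.sum_PstepA_le_one hA z

lemma qs_zero_of_not_mem {z : V} (hz : z ∉ A) (k : ℕ) : G.qs A hA k z = 0 :=
  Finset.sum_eq_zero fun y _ => G.PnA_zero_left A hz k y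

lemma qs_antitone (k : ℕ) (z : V) : G.qs A hA (k + 1) z ≤ G.qs A hA k z := by
  induction k generalizing z with
  | zero =>
    rw [G.qs_zero hA]
    split
    · exact G.qs_le_one hA 1 z
    · rename_i hz
      rw [G.qs_zero_of_not_mem hA hz]
  | succ n ih =>
    rw [G.qs_succ hA, G.qs_succ hA]
    exact Finset.sum_le_sum fun w _ =>
      mul_le_mul_of_nonneg_left (ih w) (G.PstepA_nonneg A z w)

lemma qs_anti_le {k l : ℕ} (h : k ≤ l) (z : V) : G.qs A hA l z ≤ G.qs A hA k z := by
  induction l with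
  | zero => rw [Nat.le_zero.1 h]
  | succ n ih =>
    rcases Nat.lt_or_ge k (n+1) with hlt | hge
    · exact le_trans (G.qs_antitone hA n z) (ih (Nat.lt_succ_iff.1 hlt))
    · rw [le_antisymm h hge]

lemma PnA_one (x y : V) : G.PnA A 1 x y = G.PstepA A x y := by
  show (∑' z, G.PstepA A x z * G.PnA A 0 z y) = _
  rw [tsum_eq_single y]
  · show G.PstepA A x y * (if y = y ∧ y ∈ A then 1 else 0) = _
    by_cases hy : y ∈ A
    · rw [if_pos ⟨rfl, hy⟩, mul_one]
    · rw [if_neg (by tauto), mul_zero, G.PstepA_eq_zero_right A x hy]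
  · intro z hz
    show G.PstepA A x z * (if z = y ∧ z ∈ A then 1 else 0) = 0
    rw [if_neg (by tauto), mul_zero]

lemma PnA_add (a b : ℕ) (x y : V) :
    G.PnA A (a + b) x y = ∑ w ∈ hA.toFinset, G.PnA A a x w * G.PnA A b w y := by
  induction a generalizing x with
  | zero =>
    simp only [Nat.zero_add]
    by_cases hx : x ∈ A
    · rw [Finset.sum_eq_single x]
      · show _ = (if x = x ∧ x ∈ A then (1:ℝ) else 0) * _
        rw [if_pos ⟨rfl, hx⟩, one_mul]
      · intro w _ hw
        show (if x = w ∧ x ∈ A then (1:ℝ) else 0) * _ = 0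
        rw [if_neg (by rintro ⟨rfl, _⟩; exact hw rfl), zero_mul]
      · intro h; exact absurd (hA.mem_toFinset.2 hx) h
    · rw [G.PnA_zero_left A hx]
      symm
      apply Finset.sum_eq_zero
      intro w _
      show (if x = w ∧ x ∈ A then (1:ℝ) else 0) * _ = 0
      rw [if_neg (by tauto), zero_mul]
  | succ n ih =>
    have h1 : n + 1 + b = (n + b) + 1 := by omega
    rw [h1, G.PnA_succ_sum hA]
    calc ∑ w ∈ hA.toFinset, G.PstepA A x w * G.PnA A (n + b) w y
        = ∑ w ∈ hA.toFinset, G.PstepA A x w *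
            ∑ u ∈ hA.toFinset, G.PnA A n w u * G.PnA A b u y :=
          Finset.sum_congr rfl fun w _ => by rw [ih]
      _ = ∑ w ∈ hA.toFinset, ∑ u ∈ hA.toFinset,
            G.PstepA A x w * (G.PnA A n w u * G.PnA A b u y) :=
          Finset.sum_congr rfl fun w _ => Finset.mul_sum _ _ _
      _ = ∑ u ∈ hA.toFinset, ∑ w ∈ hA.toFinset,
            G.PstepA A x w * (G.PnA A n w u * G.PnA A b u y) := Finset.sum_comm
      _ = ∑ u ∈ hA.toFinset,
            (∑ w ∈ hA.toFinset, G.PstepA A x w * G.PnA A n w u) * G.PnA A b u y := by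
          refine Finset.sum_congr rfl fun u _ => ?_
          rw [Finset.sum_mul]
          exact Finset.sum_congr rfl fun w _ => by ring
      _ = ∑ u ∈ hA.toFinset, G.PnA A (n + 1) x u * G.PnA A b u y :=
          Finset.sum_congr rfl fun u _ => by rw [← G.PnA_succ_sum hA]

lemma qs_comp (a b : ℕ) (z : V) :
    G.qs A hA (a + b) z = ∑ w ∈ hA.toFinset, G.PnA A a z w * G.qs A hA b w := by
  unfold qs
  calc ∑ y ∈ hA.toFinset, G.PnA A (a+b) z y
      = ∑ y ∈ hA.toFinset, ∑ w ∈ hA.toFinset, G.PnA A a z w * G.PnA A b w y :=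
        Finset.sum_congr rfl fun y _ => G.PnA_add hA a b z y
    _ = ∑ w ∈ hA.toFinset, ∑ y ∈ hA.toFinset, G.PnA A a z w * G.PnA A b w y :=
        Finset.sum_comm
    _ = ∑ w ∈ hA.toFinset, G.PnA A a z w * ∑ y ∈ hA.toFinset, G.PnA A b w y :=
        Finset.sum_congr rfl fun w _ => (Finset.mul_sum _ _ _).symm


lemma Pstep_le_one (x y : V) : G.Pstep x y ≤ 1 := by
  rcases eq_or_lt_of_le (G.mu_nonneg x) with h | h
  · unfold Pstep; rw [← h]; simp
  · unfold Pstep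
    rw [div_le_one h]
    exact Summable.le_tsum (G.w_summable x) y (fun z _ => G.w_nonneg x z)

lemma walk_bound : ∀ {a b : V} (p : G.toSimpleGraph.Walk a b), b ∉ A →
    ∃ ε : ℝ, 0 < ε ∧ ε ≤ 1 ∧ G.qs A hA p.length a ≤ 1 - ε := by
  intro a b p
  induction p with
  | nil =>
    intro hb
    refine ⟨1, one_pos, le_refl 1, ?_⟩
    rw [G.qs_zero_of_not_mem hA hb]
    norm_num
  | cons hadj ptail ih =>
    rename_i u c d
    intro hb
    by_cases hu : u ∈ A
    · obtain ⟨ε', hε'1, hε'2, hε'3⟩ := ih hb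
      have hwpos : 0 < G.w u c := hadj
      have hmupos : 0 < G.mu u := lt_of_lt_of_le hwpos
        (Summable.le_tsum (G.w_summable u) c (fun z _ => G.w_nonneg u z))
      have hPpos : 0 < G.Pstep u c := div_pos hwpos hmupos
      refine ⟨G.Pstep u c * ε', mul_pos hPpos hε'1, ?_, ?_⟩
      · calc G.Pstep u c * ε' ≤ 1 * 1 :=
              mul_le_mul (G.Pstep_le_one u c) hε'2 hε'1.le one_pos.le
          _ = 1 := mul_one 1
      · show G.qs A hA (ptail.length + 1) u ≤ _
        by_cases hc : c ∈ A
        · have hterm : ∀ w ∈ hA.toFinset, G.PstepA A u w * G.qs A hA ptail.length w ≤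
              G.PstepA A u w - (if w = c then G.Pstep u c * ε' else 0) := by
            intro w _
            by_cases hw : w = c
            · subst hw
              rw [if_pos rfl, G.PstepA_eq A hu hc]
              calc G.Pstep u w * G.qs A hA ptail.length w ≤ G.Pstep u w * (1 - ε') :=
                    mul_le_mul_of_nonneg_left hε'3 (G.Pstep_nonneg u w)
                _ = G.Pstep u w - G.Pstep u w * ε' := by ring
            · rw [if_neg hw, sub_zero]
              calc G.PstepA A u w * G.qs A hA ptail.length w ≤ G.PstepA A u w * 1 :=
                    mul_le_mul_of_nonneg_left (G.qs_le_one hA _ w) (G.PstepA_nonneg A u w)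
                _ = G.PstepA A u w := mul_one _
          calc G.qs A hA (ptail.length + 1) u
              = ∑ w ∈ hA.toFinset, G.PstepA A u w * G.qs A hA ptail.length w :=
                G.qs_succ hA _ u
            _ ≤ ∑ w ∈ hA.toFinset,
                  (G.PstepA A u w - (if w = c then G.Pstep u c * ε' else 0)) :=
                Finset.sum_le_sum hterm
            _ = (∑ w ∈ hA.toFinset, G.PstepA A u w) -
                  ∑ w ∈ hA.toFinset, (if w = c then G.Pstep u c * ε' else 0) :=
                Finset.sum_sub_distrib _ _
            _ = (∑ w ∈ hA.toFinset, G.PstepA A u w) - G.Pstep u c * ε' := by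
                rw [Finset.sum_ite_eq' hA.toFinset c, if_pos (hA.mem_toFinset.2 hc)]
            _ ≤ 1 - G.Pstep u c * ε' := by
                have := G.sum_PstepA_le_one hA u
                linarith
        · have hcfin : c ∉ hA.toFinset := fun h => hc (hA.mem_toFinset.1 h)
          have hsum : (∑ w ∈ hA.toFinset, G.Pstep u w) + G.Pstep u c ≤ 1 := by
            have : ∑ w ∈ insert c hA.toFinset, G.Pstep u w ≤ 1 :=
              le_trans (Summable.sum_le_tsum _ (fun z _ => G.Pstep_nonneg u z) (G.Pstep_summable u))
                (G.tsum_Pstep_le_one u)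
            rw [Finset.sum_insert hcfin] at this
            linarith
          calc G.qs A hA (ptail.length + 1) u
              = ∑ w ∈ hA.toFinset, G.PstepA A u w * G.qs A hA ptail.length w :=
                G.qs_succ hA _ u
            _ ≤ ∑ w ∈ hA.toFinset, G.Pstep u w := Finset.sum_le_sum (fun w _ => by
                calc G.PstepA A u w * G.qs A hA ptail.length w
                    ≤ G.Pstep u w * 1 := mul_le_mul (G.PstepA_le A u w)
                      (G.qs_le_one hA _ w) (G.qs_nonneg hA _ w) (G.Pstep_nonneg u w)
                  _ = G.Pstep u w := mul_one _)
            _ ≤ 1 - G.Pstep u c := by linarith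
            _ ≤ 1 - G.Pstep u c * ε' := by
                have : G.Pstep u c * ε' ≤ G.Pstep u c * 1 :=
                  mul_le_mul_of_nonneg_left hε'2 (G.Pstep_nonneg u c)
                rw [mul_one] at this
                linarith
    · refine ⟨1, one_pos, le_refl 1, ?_⟩
      rw [G.qs_zero_of_not_mem hA hu]
      norm_num

lemma exists_unif [Infinite V] (hconn : G.toSimpleGraph.Connected) :
    ∃ (L : ℕ) (ε : ℝ), 1 ≤ L ∧ 0 < ε ∧ ε ≤ 1 ∧ ∀ z, G.qs A hA L z ≤ 1 - ε := by
  have key : ∀ z : V, ∃ (ℓ : ℕ) (ε : ℝ), 0 < ε ∧ ε ≤ 1 ∧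
      ∀ k, ℓ ≤ k → G.qs A hA k z ≤ 1 - ε := by
    intro z
    obtain ⟨y, hy⟩ := hA.infinite_compl.nonempty
    obtain ⟨p⟩ := hconn z y
    obtain ⟨ε, h1, h2, h3⟩ := G.walk_bound hA p hy
    exact ⟨p.length, ε, h1, h2, fun k hk => le_trans (G.qs_anti_le hA hk z) h3⟩
  choose ℓf εf hε1 hε2 hq using key
  by_cases hne : hA.toFinset.Nonempty
  · refine ⟨max 1 (hA.toFinset.sup ℓf), hA.toFinset.inf' hne εf, le_max_left _ _,
      ?_, ?_, ?_⟩
    · rw [Finset.lt_inf'_iff]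
      intro z _
      exact hε1 z
    · obtain ⟨z0, hz0⟩ := hne
      exact le_trans (Finset.inf'_le εf hz0) (hε2 z0)
    · intro z
      by_cases hz : z ∈ A
      · have h1 : ℓf z ≤ max 1 (hA.toFinset.sup ℓf) :=
          le_trans (Finset.le_sup (hA.mem_toFinset.2 hz)) (le_max_right _ _)
        have h2 := hq z _ h1
        have h3 : hA.toFinset.inf' hne εf ≤ εf z := Finset.inf'_le εf (hA.mem_toFinset.2 hz)
        linarith
      · rw [G.qs_zero_of_not_mem hA hz]
        obtain ⟨z0, hz0⟩ := hne
        have := le_trans (Finset.inf'_le εf hz0) (hε2 z0)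
        linarith
  · refine ⟨1, 1, le_refl 1, one_pos, le_refl 1, fun z => ?_⟩
    have hz : z ∉ A := fun h => hne ⟨z, hA.mem_toFinset.2 h⟩
    rw [G.qs_zero_of_not_mem hA hz]
    norm_num

lemma qs_geom {L : ℕ} {ε : ℝ} (hL : 1 ≤ L) (hε1 : 0 < ε) (hε2 : ε ≤ 1)
    (hunif : ∀ z, G.qs A hA L z ≤ 1 - ε) :
    ∀ (k : ℕ) (z : V), G.qs A hA (k * L) z ≤ (1 - ε) ^ k := by
  intro k
  induction k with
  | zero => intro z; simpa using G.qs_le_one hA 0 z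
  | succ m ih =>
    intro z
    have hrw : (m + 1) * L = L + m * L := by ring
    rw [hrw, G.qs_comp hA]
    calc ∑ w ∈ hA.toFinset, G.PnA A L z w * G.qs A hA (m * L) w
        ≤ ∑ w ∈ hA.toFinset, G.PnA A L z w * (1 - ε) ^ m :=
          Finset.sum_le_sum fun w _ =>
            mul_le_mul_of_nonneg_left (ih w) (G.PnA_nonneg A L z w)
      _ = (1 - ε) ^ m * G.qs A hA L z := by rw [← Finset.sum_mul, mul_comm]; rfl
      _ ≤ (1 - ε) ^ m * (1 - ε) :=
          mul_le_mul_of_nonneg_left (hunif z) (pow_nonneg (by linarith) m)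
      _ = (1 - ε) ^ (m + 1) := by ring

lemma sum_range_qs_le {L : ℕ} {ε : ℝ} (hL : 1 ≤ L) (hε1 : 0 < ε) (hε2 : ε ≤ 1)
    (hunif : ∀ z, G.qs A hA L z ≤ 1 - ε) (z : V) (N : ℕ) :
    ∑ n ∈ Finset.range N, G.qs A hA n z ≤ L * ε⁻¹ := by
  have hblock : ∀ M : ℕ, ∑ n ∈ Finset.range (M * L), G.qs A hA n z ≤
      (∑ k ∈ Finset.range M, (1 - ε) ^ k) * L := by
    intro M
    induction M with
    | zero => simp
    | succ m ih =>
      have hsplit : Finset.range ((m + 1) * L) =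
          Finset.range (m * L) ∪ Finset.Ico (m * L) ((m + 1) * L) := by
        rw [Finset.range_eq_Ico, Finset.range_eq_Ico]
        exact (Finset.Ico_union_Ico_eq_Ico (Nat.zero_le (m * L)) (show m * L ≤ (m + 1) * L by nlinarith)).symm
      have hdisj : Disjoint (Finset.range (m * L)) (Finset.Ico (m * L) ((m + 1) * L)) := by
        rw [Finset.range_eq_Ico]
        exact Finset.Ico_disjoint_Ico_consecutive 0 (m * L) ((m + 1) * L)
      rw [hsplit, Finset.sum_union hdisj, Finset.sum_range_succ]
      have hdistr : ((∑ k ∈ Finset.range m, (1 - ε) ^ k) + (1 - ε) ^ m) * (L : ℝ) =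
          (∑ k ∈ Finset.range m, (1 - ε) ^ k) * L + (1 - ε) ^ m * L := by ring
      rw [hdistr]
      have htail : ∑ n ∈ Finset.Ico (m * L) ((m + 1) * L), G.qs A hA n z ≤ (1 - ε) ^ m * L := by
        calc ∑ n ∈ Finset.Ico (m * L) ((m + 1) * L), G.qs A hA n z
            ≤ ∑ _n ∈ Finset.Ico (m * L) ((m + 1) * L), (1 - ε) ^ m := by
              apply Finset.sum_le_sum
              intro n hn
              rw [Finset.mem_Ico] at hn
              exact le_trans (G.qs_anti_le hA hn.1 z) (G.qs_geom hA hL hε1 hε2 hunif m z)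
          _ = (1 - ε) ^ m * L := by
              rw [Finset.sum_const, Nat.card_Ico]
              have : (m + 1) * L - m * L = L := by
                have : (m + 1) * L = m * L + L := by ring
                omega
              rw [this, nsmul_eq_mul, mul_comm]
      exact add_le_add ih htail
  calc ∑ n ∈ Finset.range N, G.qs A hA n z
      ≤ ∑ n ∈ Finset.range (N * L), G.qs A hA n z := by
        apply Finset.sum_le_sum_of_subset_of_nonneg
        · exact Finset.range_subset_range.2 (Nat.le_mul_of_pos_right N (by omega))
        · intro n _ _; exact G.qs_nonneg hA n z
    _ ≤ (∑ k ∈ Finset.range N, (1 - ε) ^ k) * L := hblock N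
    _ ≤ ε⁻¹ * L := by
        apply mul_le_mul_of_nonneg_right _ (by positivity)
        have hlt : |1 - ε| < 1 := by rw [abs_lt]; constructor <;> linarith
        calc ∑ k ∈ Finset.range N, (1 - ε) ^ k
            ≤ ∑' k : ℕ, (1 - ε) ^ k := Summable.sum_le_tsum _
              (fun k _ => pow_nonneg (by linarith) k) (summable_geometric_of_abs_lt_one hlt)
          _ = (1 - (1 - ε))⁻¹ := tsum_geometric_of_abs_lt_one hlt
          _ = ε⁻¹ := by norm_num
    _ = L * ε⁻¹ := mul_comm _ _

lemma qs_summable [Infinite V] (hconn : G.toSimpleGraph.Connected) (z : V) :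
    Summable (fun k => G.qs A hA k z) := by
  obtain ⟨L, ε, hL, hε1, hε2, hunif⟩ := G.exists_unif hA hconn
  exact summable_of_sum_range_le (fun n => G.qs_nonneg hA n z)
    (G.sum_range_qs_le hA hL hε1 hε2 hunif z)

lemma meanExit_eq_tsum_qs (z : V) : G.meanExit A z = ∑' k, G.qs A hA k z := by
  unfold meanExit
  exact tsum_congr fun k => G.tsum_PnA_eq hA k z

lemma PstepA_mono {A B : Set V} (hAB : A ⊆ B) (x y : V) : G.PstepA A x y ≤ G.PstepA B x y := by
  unfold PstepA
  by_cases h : x ∈ A ∧ y ∈ A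
  · rw [if_pos h, if_pos ⟨hAB h.1, hAB h.2⟩]
  · rw [if_neg h]
    split <;> [exact G.Pstep_nonneg x y; exact le_refl 0]

lemma PnA_mono {A B : Set V} (hAB : A ⊆ B) (hB : B.Finite) :
    ∀ (k : ℕ) (x y : V), G.PnA A k x y ≤ G.PnA B k x y := by
  intro k
  induction k with
  | zero =>
    intro x y
    show (if x = y ∧ x ∈ A then (1:ℝ) else 0) ≤ (if x = y ∧ x ∈ B then (1:ℝ) else 0)
    by_cases h : x = y ∧ x ∈ A
    · rw [if_pos h, if_pos ⟨h.1, hAB h.2⟩]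
    · rw [if_neg h]
      split <;> norm_num
  | succ n ih =>
    intro x y
    have hlhs : G.PnA A (n + 1) x y =
        ∑ w ∈ hB.toFinset, G.PstepA A x w * G.PnA A n w y := by
      show (∑' z, G.PstepA A x z * G.PnA A n z y) = _
      apply tsum_eq_sum
      intro w hw
      rw [G.PstepA_eq_zero_right A x
        (fun h => hw (hB.mem_toFinset.2 (hAB h))), zero_mul]
    rw [hlhs, G.PnA_succ_sum hB]
    exact Finset.sum_le_sum fun w _ => mul_le_mul (G.PstepA_mono hAB x w) (ih w y)
      (G.PnA_nonneg A n w y) (G.PstepA_nonneg B x w)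

lemma qs_mono {A B : Set V} (hA : A.Finite) (hB : B.Finite) (hAB : A ⊆ B)
    (k : ℕ) (z : V) : G.qs A hA k z ≤ G.qs B hB k z := by
  calc G.qs A hA k z = ∑ y ∈ hA.toFinset, G.PnA A k z y := rfl
    _ ≤ ∑ y ∈ hA.toFinset, G.PnA B k z y :=
        Finset.sum_le_sum fun y _ => G.PnA_mono hAB hB k z y
    _ ≤ ∑ y ∈ hB.toFinset, G.PnA B k z y := by
        apply Finset.sum_le_sum_of_subset_of_nonneg
        · intro y hy
          exact hB.mem_toFinset.2 (hAB (hA.mem_toFinset.1 hy))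
        · intro y _ _
          exact G.PnA_nonneg B k z y
    _ = G.qs B hB k z := rfl

/-- The exit kernel through the boundary of `A1` inside `A`. -/
def hker (A A1 : Set V) (hA1 : A1.Finite) (x : V) (j : ℕ) (ζ : V) : ℝ :=
  ∑ w ∈ hA1.toFinset, G.PnA A1 j x w * G.PstepA A w ζ

lemma hker_nonneg (A A1 : Set V) (hA1 : A1.Finite) (x : V) (j : ℕ) (ζ : V) :
    0 ≤ G.hker A A1 hA1 x j ζ :=
  Finset.sum_nonneg fun w _ => mul_nonneg (G.PnA_nonneg A1 j x w) (G.PstepA_nonneg A w ζ)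

lemma hker_zero (A A1 : Set V) (hA1 : A1.Finite) {x : V} (hx : x ∈ A1) (ζ : V) :
    G.hker A A1 hA1 x 0 ζ = G.PstepA A x ζ := by
  unfold hker
  rw [Finset.sum_eq_single x]
  · show (if x = x ∧ x ∈ A1 then (1:ℝ) else 0) * _ = _
    rw [if_pos ⟨rfl, hx⟩, one_mul]
  · intro w _ hw
    show (if x = w ∧ x ∈ A1 then (1:ℝ) else 0) * _ = 0
    rw [if_neg (by rintro ⟨rfl, _⟩; exact hw rfl), zero_mul]
  · intro h
    exact absurd (hA1.mem_toFinset.2 hx) h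

lemma hker_succ (A A1 : Set V) (hA1 : A1.Finite) (x : V) (j : ℕ) (ζ : V) :
    ∑ u ∈ hA1.toFinset, G.PstepA A1 x u * G.hker A A1 hA1 u j ζ =
      G.hker A A1 hA1 x (j + 1) ζ := by
  unfold hker
  calc ∑ u ∈ hA1.toFinset, G.PstepA A1 x u *
        ∑ w ∈ hA1.toFinset, G.PnA A1 j u w * G.PstepA A w ζ
      = ∑ u ∈ hA1.toFinset, ∑ w ∈ hA1.toFinset,
          G.PstepA A1 x u * (G.PnA A1 j u w * G.PstepA A w ζ) :=
        Finset.sum_congr rfl fun u _ => Finset.mul_sum _ _ _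
    _ = ∑ w ∈ hA1.toFinset, ∑ u ∈ hA1.toFinset,
          G.PstepA A1 x u * (G.PnA A1 j u w * G.PstepA A w ζ) := Finset.sum_comm
    _ = ∑ w ∈ hA1.toFinset,
          (∑ u ∈ hA1.toFinset, G.PstepA A1 x u * G.PnA A1 j u w) * G.PstepA A w ζ := by
        refine Finset.sum_congr rfl fun w _ => ?_
        rw [Finset.sum_mul]
        exact Finset.sum_congr rfl fun u _ => by ring
    _ = ∑ w ∈ hA1.toFinset, G.PnA A1 (j + 1) x w * G.PstepA A w ζ :=
        Finset.sum_congr rfl fun w _ => by rw [← G.PnA_succ_sum hA1]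

lemma hker_exit_mass {A A1 : Set V} (hA : A.Finite) (hA1 : A1.Finite) (hsub : A1 ⊆ A)
    (hmu : ∀ w, w ∈ A1 → 0 < G.mu w)
    (hadjA : ∀ w, w ∈ A1 → ∀ ζ, 0 < G.w w ζ → ζ ∈ A) (x : V) (j : ℕ) :
    ∑ ζ ∈ hA.toFinset \ hA1.toFinset, G.hker A A1 hA1 x j ζ =
      G.qs A1 hA1 j x - G.qs A1 hA1 (j + 1) x := by
  have hfinsub : hA1.toFinset ⊆ hA.toFinset := by
    intro y hy
    exact hA.mem_toFinset.2 (hsub (hA1.mem_toFinset.1 hy))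
  have hfull : ∀ w, w ∈ A1 → ∑ ζ ∈ hA.toFinset, G.PstepA A w ζ = 1 := by
    intro w hw
    have h1 : ∑ ζ ∈ hA.toFinset, G.PstepA A w ζ = ∑ ζ ∈ hA.toFinset, G.Pstep w ζ := by
      refine Finset.sum_congr rfl fun ζ hζ => ?_
      exact G.PstepA_eq A (hsub hw) (hA.mem_toFinset.1 hζ)
    have h2 : (∑' ζ, G.Pstep w ζ) = ∑ ζ ∈ hA.toFinset, G.Pstep w ζ := by
      apply tsum_eq_sum
      intro ζ hζ
      by_contra hne
      have hwpos : 0 < G.w w ζ := by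
        rcases eq_or_lt_of_le (G.w_nonneg w ζ) with h | h
        · exact absurd (by rw [Pstep, ← h, zero_div]) hne
        · exact h
      exact hζ (hA.mem_toFinset.2 (hadjA w hw ζ hwpos))
    rw [h1, ← h2, G.tsum_Pstep_eq_one w (hmu w hw)]
  calc ∑ ζ ∈ hA.toFinset \ hA1.toFinset, G.hker A A1 hA1 x j ζ
      = ∑ ζ ∈ hA.toFinset \ hA1.toFinset, ∑ w ∈ hA1.toFinset,
          G.PnA A1 j x w * G.PstepA A w ζ := rfl
    _ = ∑ w ∈ hA1.toFinset, ∑ ζ ∈ hA.toFinset \ hA1.toFinset,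
          G.PnA A1 j x w * G.PstepA A w ζ := Finset.sum_comm
    _ = ∑ w ∈ hA1.toFinset, G.PnA A1 j x w *
          ∑ ζ ∈ hA.toFinset \ hA1.toFinset, G.PstepA A w ζ :=
        Finset.sum_congr rfl fun w _ => (Finset.mul_sum _ _ _).symm
    _ = ∑ w ∈ hA1.toFinset, G.PnA A1 j x w *
          (1 - ∑ ζ ∈ hA1.toFinset, G.PstepA A w ζ) := by
        refine Finset.sum_congr rfl fun w hw => ?_
        congr 1
        have := Finset.sum_sdiff (f := fun ζ => G.PstepA A w ζ) hfinsub
        rw [hfull w (hA1.mem_toFinset.1 hw)] at this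
        linarith
    _ = G.qs A1 hA1 j x - G.qs A1 hA1 (j + 1) x := by
        have hexp : ∀ w ∈ hA1.toFinset, G.PnA A1 j x w *
            (1 - ∑ ζ ∈ hA1.toFinset, G.PstepA A w ζ) =
            G.PnA A1 j x w - ∑ ζ ∈ hA1.toFinset, G.PnA A1 j x w * G.PstepA A1 w ζ := by
          intro w hw
          have : ∑ ζ ∈ hA1.toFinset, G.PstepA A w ζ =
              ∑ ζ ∈ hA1.toFinset, G.PstepA A1 w ζ := by
            refine Finset.sum_congr rfl fun ζ hζ => ?_
            rw [G.PstepA_eq A (hsub (hA1.mem_toFinset.1 hw)) (hsub (hA1.mem_toFinset.1 hζ)),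
              G.PstepA_eq A1 (hA1.mem_toFinset.1 hw) (hA1.mem_toFinset.1 hζ)]
          rw [this, mul_sub, mul_one, Finset.mul_sum]
        rw [Finset.sum_congr rfl hexp, Finset.sum_sub_distrib]
        congr 1
        show _ = ∑ ζ ∈ hA1.toFinset, G.PnA A1 (j+1) x ζ
        rw [Finset.sum_comm]
        refine Finset.sum_congr rfl fun ζ _ => ?_
        rw [G.PnA_add hA1 j 1]
        refine Finset.sum_congr rfl fun w _ => ?_
        rw [G.PnA_one]

lemma qs_decomposition {A A1 : Set V} (hA : A.Finite) (hA1 : A1.Finite) (hsub : A1 ⊆ A) :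
    ∀ (n : ℕ) (x : V), x ∈ A1 →
      G.qs A hA n x = G.qs A1 hA1 n x +
        ∑ j ∈ Finset.range n, ∑ ζ ∈ hA.toFinset \ hA1.toFinset,
          G.hker A A1 hA1 x j ζ * G.qs A hA (n - 1 - j) ζ := by
  intro n
  induction n with
  | zero =>
    intro x hx
    rw [G.qs_zero hA, G.qs_zero hA1, if_pos (hsub hx), if_pos hx]
    simp
  | succ n ih =>
    intro x hx
    have hfinsub : hA1.toFinset ⊆ hA.toFinset := by
      intro y hy
      exact hA.mem_toFinset.2 (hsub (hA1.mem_toFinset.1 hy))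
    have step1 : G.qs A hA (n + 1) x =
        ∑ u ∈ hA.toFinset \ hA1.toFinset, G.PstepA A x u * G.qs A hA n u +
        ∑ u ∈ hA1.toFinset, G.PstepA A x u * G.qs A hA n u := by
      rw [G.qs_succ hA, ← Finset.sum_sdiff hfinsub]
    have hterm1 : ∑ u ∈ hA1.toFinset, G.PstepA A x u * G.qs A hA n u =
        G.qs A1 hA1 (n + 1) x +
        ∑ j ∈ Finset.range n, ∑ ζ ∈ hA.toFinset \ hA1.toFinset,
          G.hker A A1 hA1 x (j + 1) ζ * G.qs A hA (n - 1 - j) ζ := by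
      have hPeq : ∀ u ∈ hA1.toFinset, G.PstepA A x u = G.PstepA A1 x u := fun u hu => by
        rw [G.PstepA_eq A (hsub hx) (hsub (hA1.mem_toFinset.1 hu)),
          G.PstepA_eq A1 hx (hA1.mem_toFinset.1 hu)]
      calc ∑ u ∈ hA1.toFinset, G.PstepA A x u * G.qs A hA n u
          = ∑ u ∈ hA1.toFinset, G.PstepA A1 x u *
              (G.qs A1 hA1 n u + ∑ j ∈ Finset.range n, ∑ ζ ∈ hA.toFinset \ hA1.toFinset,
                G.hker A A1 hA1 u j ζ * G.qs A hA (n - 1 - j) ζ) := by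
            refine Finset.sum_congr rfl fun u hu => ?_
            rw [hPeq u hu, ih u (hA1.mem_toFinset.1 hu)]
        _ = ∑ u ∈ hA1.toFinset, G.PstepA A1 x u * G.qs A1 hA1 n u +
            ∑ u ∈ hA1.toFinset, G.PstepA A1 x u *
              ∑ j ∈ Finset.range n, ∑ ζ ∈ hA.toFinset \ hA1.toFinset,
                G.hker A A1 hA1 u j ζ * G.qs A hA (n - 1 - j) ζ := by
            rw [← Finset.sum_add_distrib]
            exact Finset.sum_congr rfl fun u _ => by ring
        _ = G.qs A1 hA1 (n + 1) x +
            ∑ j ∈ Finset.range n, ∑ ζ ∈ hA.toFinset \ hA1.toFinset,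
              G.hker A A1 hA1 x (j + 1) ζ * G.qs A hA (n - 1 - j) ζ := by
            congr 1
            · rw [G.qs_succ hA1]
            · calc ∑ u ∈ hA1.toFinset, G.PstepA A1 x u *
                  ∑ j ∈ Finset.range n, ∑ ζ ∈ hA.toFinset \ hA1.toFinset,
                    G.hker A A1 hA1 u j ζ * G.qs A hA (n - 1 - j) ζ
                  = ∑ u ∈ hA1.toFinset, ∑ j ∈ Finset.range n,
                      G.PstepA A1 x u * ∑ ζ ∈ hA.toFinset \ hA1.toFinset,
                        G.hker A A1 hA1 u j ζ * G.qs A hA (n - 1 - j) ζ :=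
                    Finset.sum_congr rfl fun u _ => Finset.mul_sum _ _ _
                _ = ∑ j ∈ Finset.range n, ∑ u ∈ hA1.toFinset,
                      G.PstepA A1 x u * ∑ ζ ∈ hA.toFinset \ hA1.toFinset,
                        G.hker A A1 hA1 u j ζ * G.qs A hA (n - 1 - j) ζ := Finset.sum_comm
                _ = ∑ j ∈ Finset.range n, ∑ ζ ∈ hA.toFinset \ hA1.toFinset,
                      G.hker A A1 hA1 x (j + 1) ζ * G.qs A hA (n - 1 - j) ζ := by
                    refine Finset.sum_congr rfl fun j _ => ?_
                    calc ∑ u ∈ hA1.toFinset, G.PstepA A1 x u *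
                          ∑ ζ ∈ hA.toFinset \ hA1.toFinset,
                            G.hker A A1 hA1 u j ζ * G.qs A hA (n - 1 - j) ζ
                        = ∑ u ∈ hA1.toFinset, ∑ ζ ∈ hA.toFinset \ hA1.toFinset,
                            G.PstepA A1 x u * (G.hker A A1 hA1 u j ζ *
                              G.qs A hA (n - 1 - j) ζ) :=
                          Finset.sum_congr rfl fun u _ => Finset.mul_sum _ _ _
                      _ = ∑ ζ ∈ hA.toFinset \ hA1.toFinset, ∑ u ∈ hA1.toFinset,
                            G.PstepA A1 x u * (G.hker A A1 hA1 u j ζ *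
                              G.qs A hA (n - 1 - j) ζ) := Finset.sum_comm
                      _ = ∑ ζ ∈ hA.toFinset \ hA1.toFinset,
                            G.hker A A1 hA1 x (j + 1) ζ * G.qs A hA (n - 1 - j) ζ := by
                          refine Finset.sum_congr rfl fun ζ _ => ?_
                          rw [← G.hker_succ A A1 hA1 x j ζ, Finset.sum_mul]
                          exact Finset.sum_congr rfl fun u _ => by ring
    have hterm2 : ∑ u ∈ hA.toFinset \ hA1.toFinset, G.PstepA A x u * G.qs A hA n u =
        ∑ ζ ∈ hA.toFinset \ hA1.toFinset,
          G.hker A A1 hA1 x 0 ζ * G.qs A hA (n + 1 - 1 - 0) ζ := by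
      refine Finset.sum_congr rfl fun ζ _ => ?_
      rw [G.hker_zero A A1 hA1 hx]
      norm_num
    rw [step1, hterm1, hterm2]
    rw [Finset.sum_range_succ' (fun j => ∑ ζ ∈ hA.toFinset \ hA1.toFinset,
      G.hker A A1 hA1 x j ζ * G.qs A hA (n + 1 - 1 - j) ζ) n]
    have hidx : ∀ j, n + 1 - 1 - (j + 1) = n - 1 - j := by intro j; omega
    have : ∑ j ∈ Finset.range n, ∑ ζ ∈ hA.toFinset \ hA1.toFinset,
        G.hker A A1 hA1 x (j + 1) ζ * G.qs A hA (n + 1 - 1 - (j + 1)) ζ =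
        ∑ j ∈ Finset.range n, ∑ ζ ∈ hA.toFinset \ hA1.toFinset,
        G.hker A A1 hA1 x (j + 1) ζ * G.qs A hA (n - 1 - j) ζ := by
      refine Finset.sum_congr rfl fun j _ => Finset.sum_congr rfl fun ζ _ => ?_
      rw [hidx j]
    rw [this]
    ring

lemma qs_partial_lower {A A1 : Set V} (hA : A.Finite) (hA1 : A1.Finite) (hsub : A1 ⊆ A)
    {x : V} (hx : x ∈ A1) (N M : ℕ) :
    ∑ n ∈ Finset.range N, G.qs A1 hA1 n x +
      ∑ j ∈ Finset.range N, ∑ ζ ∈ hA.toFinset \ hA1.toFinset,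
        G.hker A A1 hA1 x j ζ * (∑ i ∈ Finset.range M, G.qs A hA i ζ) ≤
    ∑ n ∈ Finset.range (N + M), G.qs A hA n x := by
  have hdec : ∑ n ∈ Finset.range (N + M), G.qs A hA n x =
      ∑ n ∈ Finset.range (N + M), G.qs A1 hA1 n x +
      ∑ n ∈ Finset.range (N + M), ∑ j ∈ Finset.range n,
        ∑ ζ ∈ hA.toFinset \ hA1.toFinset,
          G.hker A A1 hA1 x j ζ * G.qs A hA (n - 1 - j) ζ := by
    rw [← Finset.sum_add_distrib]
    exact Finset.sum_congr rfl fun n _ => G.qs_decomposition hA hA1 hsub n x hx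
  have hswap : ∑ n ∈ Finset.range (N + M), ∑ j ∈ Finset.range n,
      ∑ ζ ∈ hA.toFinset \ hA1.toFinset,
        G.hker A A1 hA1 x j ζ * G.qs A hA (n - 1 - j) ζ =
      ∑ j ∈ Finset.range (N + M), ∑ n ∈ Finset.Ico (j + 1) (N + M),
      ∑ ζ ∈ hA.toFinset \ hA1.toFinset,
        G.hker A A1 hA1 x j ζ * G.qs A hA (n - 1 - j) ζ := by
    apply Finset.sum_comm'
    intro n j
    simp only [Finset.mem_range, Finset.mem_Ico]
    omega
  have hterm_nonneg : ∀ (j n : ℕ), 0 ≤ ∑ ζ ∈ hA.toFinset \ hA1.toFinset,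
      G.hker A A1 hA1 x j ζ * G.qs A hA (n - 1 - j) ζ := fun j n =>
    Finset.sum_nonneg fun ζ _ => mul_nonneg (G.hker_nonneg A A1 hA1 x j ζ)
      (G.qs_nonneg hA _ ζ)
  have hinner : ∀ j ∈ Finset.range N,
      ∑ ζ ∈ hA.toFinset \ hA1.toFinset,
        G.hker A A1 hA1 x j ζ * (∑ i ∈ Finset.range M, G.qs A hA i ζ) ≤
      ∑ n ∈ Finset.Ico (j + 1) (N + M), ∑ ζ ∈ hA.toFinset \ hA1.toFinset,
        G.hker A A1 hA1 x j ζ * G.qs A hA (n - 1 - j) ζ := by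
    intro j hj
    rw [Finset.mem_range] at hj
    have h1 : ∑ n ∈ Finset.Ico (j + 1) (j + 1 + M), ∑ ζ ∈ hA.toFinset \ hA1.toFinset,
        G.hker A A1 hA1 x j ζ * G.qs A hA (n - 1 - j) ζ ≤
        ∑ n ∈ Finset.Ico (j + 1) (N + M), ∑ ζ ∈ hA.toFinset \ hA1.toFinset,
          G.hker A A1 hA1 x j ζ * G.qs A hA (n - 1 - j) ζ := by
      apply Finset.sum_le_sum_of_subset_of_nonneg
      · apply Finset.Ico_subset_Ico (le_refl _)
        omega
      · intro n _ _
        exact hterm_nonneg j n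
    refine le_trans (le_of_eq ?_) h1
    rw [Finset.sum_Ico_eq_sum_range]
    have hM : j + 1 + M - (j + 1) = M := by omega
    rw [hM]
    rw [Finset.sum_comm]
    refine Finset.sum_congr rfl fun ζ _ => ?_
    rw [Finset.mul_sum]
    refine Finset.sum_congr rfl fun i _ => ?_
    have : j + 1 + i - 1 - j = i := by omega
    rw [this]
  calc ∑ n ∈ Finset.range N, G.qs A1 hA1 n x +
        ∑ j ∈ Finset.range N, ∑ ζ ∈ hA.toFinset \ hA1.toFinset,
          G.hker A A1 hA1 x j ζ * (∑ i ∈ Finset.range M, G.qs A hA i ζ)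
      ≤ ∑ n ∈ Finset.range (N + M), G.qs A1 hA1 n x +
        ∑ j ∈ Finset.range N, ∑ n ∈ Finset.Ico (j + 1) (N + M),
          ∑ ζ ∈ hA.toFinset \ hA1.toFinset,
            G.hker A A1 hA1 x j ζ * G.qs A hA (n - 1 - j) ζ := by
        apply add_le_add
        · apply Finset.sum_le_sum_of_subset_of_nonneg
          · exact Finset.range_subset_range.2 (by omega)
          · intro n _ _
            exact G.qs_nonneg hA1 n x
        · exact Finset.sum_le_sum hinner
    _ ≤ ∑ n ∈ Finset.range (N + M), G.qs A1 hA1 n x +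
        ∑ j ∈ Finset.range (N + M), ∑ n ∈ Finset.Ico (j + 1) (N + M),
          ∑ ζ ∈ hA.toFinset \ hA1.toFinset,
            G.hker A A1 hA1 x j ζ * G.qs A hA (n - 1 - j) ζ := by
        apply add_le_add_right
        apply Finset.sum_le_sum_of_subset_of_nonneg
        · exact Finset.range_subset_range.2 (by omega)
        · intro j _ _
          exact Finset.sum_nonneg fun n _ => hterm_nonneg j n
    _ = ∑ n ∈ Finset.range (N + M), G.qs A hA n x := by rw [hdec, hswap]

lemma mu_pos [Infinite V] (hconn : G.toSimpleGraph.Connected) (z : V) : 0 < G.mu z := by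
  obtain ⟨y, hy⟩ := exists_adj_of_connected G.toSimpleGraph hconn z
  exact lt_of_lt_of_le hy (Summable.le_tsum (G.w_summable z) y (fun u _ => G.w_nonneg z u))

lemma ball_finite (hconn : G.toSimpleGraph.Connected) (x : V) (r : ℝ) :
    (G.ball x r).Finite := by
  apply Set.Finite.subset
    (finite_closedBall G.toSimpleGraph (fun v => G.locFin v) hconn x ⌈r⌉₊)
  intro y hy
  have h1 : (G.gdist x y : ℝ) < r := hy
  have h2 : r ≤ (⌈r⌉₊ : ℝ) := Nat.le_ceil r
  have : (G.gdist x y : ℝ) < (⌈r⌉₊ : ℝ) := lt_of_lt_of_le h1 h2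
  exact le_of_lt (Nat.cast_lt.1 this)

lemma meanExit_nonneg (A : Set V) (z : V) : 0 ≤ G.meanExit A z :=
  tsum_nonneg fun k => tsum_nonneg fun y => G.PnA_nonneg A k z y

lemma Fm_nonneg (R : ℕ) : 0 ≤ G.Fm R :=
  Real.iInf_nonneg fun x => G.meanExit_nonneg _ x

lemma Fm_le_mexit (R : ℕ) (x : V) : G.Fm R ≤ G.mexit x ↑R :=
  ciInf_le ⟨0, by rintro t ⟨y, rfl⟩; exact G.meanExit_nonneg _ y⟩ x

lemma ball_zero (x : V) : G.ball x 0 = ∅ := by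
  ext y
  simp only [ball, Set.mem_setOf_eq, Set.mem_empty_iff_false, iff_false, not_lt]
  positivity

lemma Fm_zero [Infinite V] : G.Fm 0 = 0 := by
  have hme : ∀ x : V, G.mexit x 0 = 0 := by
    intro x
    unfold mexit meanExit
    rw [G.ball_zero x]
    have h1 : ∀ k y, G.PnA (∅ : Set V) k x y = 0 :=
      G.PnA_zero_left ∅ (Set.notMem_empty x)
    have : ∀ k : ℕ, ∑' (y : V), G.PnA (∅ : Set V) k x y = 0 := by
      intro k
      simp [h1 k]
    simp [this]
  unfold Fm
  rw [Nat.cast_zero]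
  simp only [hme]
  exact ciInf_const

lemma mexit_superadd [Infinite V] (hconn : G.toSimpleGraph.Connected)
    (R S : ℕ) (hR : 1 ≤ R) (hS : 1 ≤ S) (x : V) :
    G.mexit x ↑R + G.Fm S ≤ G.mexit x ↑(R + S) := by
  apply le_of_forall_pos_le_add
  intro δ hδ
  set A1 : Set V := G.ball x ↑R with hA1def
  set A : Set V := G.ball x ↑(R + S) with hAdef
  have hA1 : A1.Finite := G.ball_finite hconn x ↑R
  have hA : A.Finite := G.ball_finite hconn x ↑(R + S)
  have hsub : A1 ⊆ A := by
    intro y hy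
    have : (G.gdist x y : ℝ) < ↑R := hy
    show (G.gdist x y : ℝ) < ↑(R + S)
    push_cast
    have : (0:ℝ) ≤ S := Nat.cast_nonneg S
    linarith
  have hx : x ∈ A1 := by
    show (G.gdist x x : ℝ) < ↑R
    have : G.gdist x x = 0 := SimpleGraph.dist_self
    rw [this]
    exact_mod_cast Nat.lt_of_lt_of_le Nat.zero_lt_one hR
  have hgd_adj : ∀ w ζ : V, 0 < G.w w ζ → G.gdist w ζ ≤ 1 := by
    intro w ζ h
    exact SimpleGraph.dist_le (SimpleGraph.Walk.cons (show G.toSimpleGraph.Adj w ζ from h)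
      SimpleGraph.Walk.nil)
  have hmemA1_nat : ∀ {y : V}, y ∈ A1 → G.gdist x y + 1 ≤ R := by
    intro y hy
    have : (G.gdist x y : ℝ) < ↑R := hy
    have := Nat.cast_lt.1 this
    omega
  have hadjA : ∀ w, w ∈ A1 → ∀ ζ, 0 < G.w w ζ → ζ ∈ A := by
    intro w hw ζ hwζ
    have h1 : G.gdist x ζ ≤ G.gdist x w + G.gdist w ζ := hconn.dist_triangle
    have h2 := hgd_adj w ζ hwζ
    have h3 := hmemA1_nat hw
    show (G.gdist x ζ : ℝ) < ↑(R + S)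
    have : G.gdist x ζ < R + S := by omega
    exact_mod_cast this
  have hgood : ∀ ζ, ζ ∈ A → ζ ∉ A1 → (∃ w ∈ A1, 0 < G.w w ζ) →
      G.ball ζ ↑S ⊆ A := by
    rintro ζ _ _ ⟨w, hw, hwζ⟩ y hy
    have h1 : G.gdist x y ≤ G.gdist x ζ + G.gdist ζ y := hconn.dist_triangle
    have h2 : G.gdist x ζ ≤ G.gdist x w + G.gdist w ζ := hconn.dist_triangle
    have h3 := hgd_adj w ζ hwζ
    have h4 := hmemA1_nat hw
    have h5 : (G.gdist ζ y : ℝ) < ↑S := hy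
    have h6 : G.gdist ζ y < S := Nat.cast_lt.1 h5
    show (G.gdist x y : ℝ) < ↑(R + S)
    have : G.gdist x y < R + S := by omega
    exact_mod_cast this
  -- choose M
  have hMex : ∃ M : ℕ, ∀ ζ ∈ hA.toFinset, G.ball ζ ↑S ⊆ A →
      G.Fm S - δ ≤ ∑ i ∈ Finset.range M, G.qs A hA i ζ := by
    have hev : ∀ ζ ∈ hA.toFinset, ∀ᶠ M in Filter.atTop, (G.ball ζ ↑S ⊆ A →
        G.Fm S - δ ≤ ∑ i ∈ Finset.range M, G.qs A hA i ζ) := by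
      intro ζ _
      by_cases hb : G.ball ζ ↑S ⊆ A
      · have hBfin : (G.ball ζ ↑S).Finite := G.ball_finite hconn ζ ↑S
        have hsumm : Summable (fun k => G.qs (G.ball ζ ↑S) hBfin k ζ) :=
          G.qs_summable hBfin hconn ζ
        have htends : Filter.Tendsto
            (fun M => ∑ i ∈ Finset.range M, G.qs (G.ball ζ ↑S) hBfin i ζ)
            Filter.atTop (nhds (G.mexit ζ ↑S)) := by
          have : G.mexit ζ ↑S = ∑' k, G.qs (G.ball ζ ↑S) hBfin k ζ :=
            G.meanExit_eq_tsum_qs hBfin ζ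
          rw [this]
          exact hsumm.hasSum.tendsto_sum_nat
        have hgt : G.Fm S - δ < G.mexit ζ ↑S := by
          have := G.Fm_le_mexit S ζ
          linarith
        filter_upwards [htends.eventually_const_le hgt] with M hM _
        calc G.Fm S - δ ≤ ∑ i ∈ Finset.range M, G.qs (G.ball ζ ↑S) hBfin i ζ := hM
          _ ≤ ∑ i ∈ Finset.range M, G.qs A hA i ζ :=
            Finset.sum_le_sum fun i _ => G.qs_mono hBfin hA hb i ζ
      · filter_upwards with M hb'
        exact absurd hb' hb
    exact ((Finset.eventually_all hA.toFinset).2 hev).exists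
  obtain ⟨M, hM⟩ := hMex
  set b : ℝ := max (G.Fm S - δ) 0 with hbdef
  have hb0 : 0 ≤ b := le_max_right _ _
  have key : ∀ N : ℕ, ∑ n ∈ Finset.range N, G.qs A1 hA1 n x +
      b * (1 - G.qs A1 hA1 N x) ≤ G.mexit x ↑(R + S) := by
    intro N
    have hsummA : Summable (fun k => G.qs A hA k x) := G.qs_summable hA hconn x
    have h1 : ∑ n ∈ Finset.range (N + M), G.qs A hA n x ≤ G.mexit x ↑(R + S) := by
      have : G.mexit x ↑(R + S) = ∑' k, G.qs A hA k x := G.meanExit_eq_tsum_qs hA x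
      rw [this]
      exact Summable.sum_le_tsum _ (fun n _ => G.qs_nonneg hA n x) hsummA
    refine le_trans ?_ (le_trans (G.qs_partial_lower hA hA1 hsub hx N M) h1)
    apply add_le_add_right
    have hmass : ∑ j ∈ Finset.range N, ∑ ζ ∈ hA.toFinset \ hA1.toFinset,
        G.hker A A1 hA1 x j ζ * b = b * (1 - G.qs A1 hA1 N x) := by
      have h2 : ∀ j ∈ Finset.range N, ∑ ζ ∈ hA.toFinset \ hA1.toFinset,
          G.hker A A1 hA1 x j ζ * b =
          (G.qs A1 hA1 j x - G.qs A1 hA1 (j + 1) x) * b := by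
        intro j _
        rw [← Finset.sum_mul, G.hker_exit_mass hA hA1 hsub
          (fun w _ => G.mu_pos hconn w) hadjA x j]
      rw [Finset.sum_congr rfl h2, ← Finset.sum_mul, Finset.sum_range_sub']
      rw [G.qs_zero hA1, if_pos hx]
      ring
    rw [← hmass]
    apply Finset.sum_le_sum
    intro j _
    apply Finset.sum_le_sum
    intro ζ hζ
    rcases eq_or_ne (G.hker A A1 hA1 x j ζ) 0 with h0 | h0
    · rw [h0, zero_mul, zero_mul]
    · apply mul_le_mul_of_nonneg_left _ (G.hker_nonneg A A1 hA1 x j ζ)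
      obtain ⟨w, hwmem, hwne⟩ := Finset.exists_ne_zero_of_sum_ne_zero h0
      have hPne : G.PstepA A w ζ ≠ 0 := fun h => hwne (by rw [h, mul_zero])
      have hwpos : 0 < G.w w ζ := by
        rcases eq_or_lt_of_le (G.w_nonneg w ζ) with h | h
        · exfalso
          apply hPne
          unfold PstepA Pstep
          rw [← h, zero_div]
          split <;> rfl
        · exact h
      rw [Finset.mem_sdiff] at hζ
      have hζA : ζ ∈ A := hA.mem_toFinset.1 hζ.1
      have hζA1 : ζ ∉ A1 := fun h => hζ.2 (hA1.mem_toFinset.2 h)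
      have hball := hgood ζ hζA hζA1 ⟨w, hA1.mem_toFinset.1 hwmem, hwpos⟩
      have := hM ζ hζ.1 hball
      apply max_le this
      exact Finset.sum_nonneg fun i _ => G.qs_nonneg hA i ζ
  have hsummA1 : Summable (fun k => G.qs A1 hA1 k x) := G.qs_summable hA1 hconn x
  have htend : Filter.Tendsto (fun N => ∑ n ∈ Finset.range N, G.qs A1 hA1 n x +
      b * (1 - G.qs A1 hA1 N x)) Filter.atTop (nhds (G.mexit x ↑R + b * (1 - 0))) := by
    apply Filter.Tendsto.add
    · have : G.mexit x ↑R = ∑' k, G.qs A1 hA1 k x := G.meanExit_eq_tsum_qs hA1 x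
      rw [this]
      exact hsummA1.hasSum.tendsto_sum_nat
    · exact (Filter.Tendsto.const_mul b
        (Filter.Tendsto.sub tendsto_const_nhds hsummA1.tendsto_atTop_zero))
  have hfinal : G.mexit x ↑R + b * (1 - 0) ≤ G.mexit x ↑(R + S) :=
    le_of_tendsto' htend key
  have hbge : G.Fm S - δ ≤ b := le_max_left _ _
  have : b * (1 - 0) = b := by ring
  rw [this] at hfinal
  linarith

end Aux
end WeightedGraph

open WeightedGraph

/-- **Corollary 4.6.** Under `(E)`, the function `F(R) = inf_x E(x,R)` is superadditive,
and consequently `F(L·R) ≥ L·F(R)`. -/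
theorem F_superadditive {V : Type*} [Countable V] [Infinite V]
    (G : WeightedGraph V) (hconn : G.toSimpleGraph.Connected)
    (hE : G.UniformE) :
    (∀ R S : ℕ, 0 < S → S < R → G.Fm R + G.Fm S ≤ G.Fm (R + S)) ∧
    (∀ L R : ℕ, (L : ℝ) * G.Fm R ≤ G.Fm (L * R)) := by
  have hsuper : ∀ R S : ℕ, 1 ≤ R → 1 ≤ S → G.Fm R + G.Fm S ≤ G.Fm (R + S) := by
    intro R S hR hS
    apply le_ciInf
    intro x
    calc G.Fm R + G.Fm S ≤ G.mexit x ↑R + G.Fm S :=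
          add_le_add_left (G.Fm_le_mexit R x) _
      _ ≤ G.mexit x ↑(R + S) := G.mexit_superadd hconn R S hR hS x
  constructor
  · intro R S hS hRS
    exact hsuper R S (by omega) hS
  · intro L R
    rcases Nat.eq_zero_or_pos R with rfl | hR
    · rw [Nat.mul_zero, G.Fm_zero]
      simp
    · induction L with
      | zero =>
        rw [Nat.zero_mul]
        simpa using G.Fm_nonneg 0
      | succ n ih =>
        rcases Nat.eq_zero_or_pos n with rfl | hn
        · simp
        · have h1 : G.Fm (n * R) + G.Fm R ≤ G.Fm (n * R + R) :=
            hsuper (n * R) R (Nat.mul_pos hn hR) hR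
          rw [Nat.succ_mul]
          push_cast
          linarith
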